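/- Let M be a connected matroid and S a connected subset of M, and write M/S = ⊕_i A_i with each A_i connected in M/S. Then each A_i ∪ S is connected in M. -/

import Mathlib

def RankAxioms {α : Type*} [DecidableEq α] (E : Finset α) (rk : Finset α → ℕ) : Prop :=
  rk ∅ = 0 ∧
  (∀ F ⊆ E, ∀ x ∈ E, rk (insert x F) = rk F ∨ rk (insert x F) = rk F + 1) ∧
  (∀ F ⊆ E, ∀ x ∈ E, ∀ y ∈ E,
    rk (insert x F) = rk F → rk (insert y F) = rk F → rk (insert x (insert y F)) = rk F)

/-- Connectedness of the matroid with rank function `rk` restricted to ground set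
`G`: no proper nonempty subset `T ⊆ G` satisfies `rk T + rk (G \ T) = rk G`. -/
def ConnOn {α : Type*} [DecidableEq α] (rk : Finset α → ℕ) (G : Finset α) : Prop :=
  ∀ T ⊆ G, T.Nonempty → T ≠ G → rk T + rk (G \ T) ≠ rk G

section aux
variable {α : Type*} [DecidableEq α] {E : Finset α} {rk : Finset α → ℕ}

lemma rk_insert_le (h : RankAxioms E rk) {F : Finset α} (hF : F ⊆ E) {x : α} (hx : x ∈ E) :
    rk F ≤ rk (insert x F) ∧ rk (insert x F) ≤ rk F + 1 := by
  rcases h.2.1 F hF x hx with h' | h' <;> omega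

lemma rk_union_le (h : RankAxioms E rk) {F : Finset α} (hF : F ⊆ E) (D : Finset α) :
    D ⊆ E → rk F ≤ rk (F ∪ D) := by
  induction D using Finset.induction_on with
  | empty => simp
  | insert _ _ ha ih =>
    rename_i a D
    intro hD
    have hD' : D ⊆ E := (Finset.insert_subset_iff.mp hD).2
    have h1 := ih hD'
    have h2 := (rk_insert_le h (Finset.union_subset hF hD') (Finset.insert_subset_iff.mp hD).1).1
    rw [Finset.union_insert]
    omega

lemma rk_mono (h : RankAxioms E rk) {F G : Finset α} (hFG : F ⊆ G) (hG : G ⊆ E) :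
    rk F ≤ rk G := by
  have := rk_union_le h (hFG.trans hG) (G \ F) ((Finset.sdiff_subset).trans hG)
  rwa [Finset.union_sdiff_of_subset hFG] at this

lemma rk_closure (h : RankAxioms E rk) {F : Finset α} (hF : F ⊆ E) {x : α} (hx : x ∈ E)
    (hxF : rk (insert x F) = rk F) (D : Finset α) :
    D ⊆ E → rk (insert x (F ∪ D)) = rk (F ∪ D) := by
  induction D using Finset.induction_on with
  | empty => simpa
  | insert _ _ ha ih =>
    rename_i d D
    intro hD
    have hd : d ∈ E := (Finset.insert_subset_iff.mp hD).1
    have hD' : D ⊆ E := (Finset.insert_subset_iff.mp hD).2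
    have hC : rk (insert x (F ∪ D)) = rk (F ∪ D) := ih hD'
    have hFD : F ∪ D ⊆ E := Finset.union_subset hF hD'
    rw [Finset.union_insert]
    rcases h.2.1 (F ∪ D) hFD d hd with hcase | hcase
    · rw [hcase]; exact h.2.2 (F ∪ D) hFD x hx d hd hC hcase
    · have h1 : rk (insert x (insert d (F ∪ D))) ≤ rk (insert x (F ∪ D)) + 1 := by
        rw [Finset.insert_comm]
        exact (rk_insert_le h (Finset.insert_subset hx hFD) hd).2
      have h2 : rk (insert d (F ∪ D)) ≤ rk (insert x (insert d (F ∪ D))) :=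
        (rk_insert_le h (Finset.insert_subset hd hFD) hx).1
      omega

lemma rk_dim (h : RankAxioms E rk) {A B : Finset α} (hAB : A ⊆ B) (hB : B ⊆ E)
    {x : α} (hx : x ∈ E) :
    rk (insert x B) + rk A ≤ rk (insert x A) + rk B := by
  have hA : A ⊆ E := hAB.trans hB
  rcases h.2.1 A hA x hx with hcase | hcase
  · have := rk_closure h hA hx hcase B hB
    rw [Finset.union_eq_right.mpr hAB] at this
    omega
  · have := (rk_insert_le h hB hx).2
    omega

lemma rk_submod_aux (h : RankAxioms E rk) (D : Finset α) :
    D ⊆ E → ∀ A B : Finset α, A ⊆ B → B ⊆ E →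
    rk (B ∪ D) + rk A ≤ rk (A ∪ D) + rk B := by
  induction D using Finset.induction_on with
  | empty => intro _ A B _ _; simp [Nat.add_comm]
  | insert _ _ ha ih =>
    rename_i d D
    intro hD A B hAB hB
    have hd : d ∈ E := (Finset.insert_subset_iff.mp hD).1
    have hD' : D ⊆ E := (Finset.insert_subset_iff.mp hD).2
    have h1 := rk_dim h (Finset.union_subset_union hAB (le_refl D))
      (Finset.union_subset hB hD') hd
    have h2 := ih hD' A B hAB hB
    rw [Finset.union_insert, Finset.union_insert]
    omega

lemma rk_submod (h : RankAxioms E rk) {X Y : Finset α} (hX : X ⊆ E) (hY : Y ⊆ E) :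
    rk (X ∪ Y) + rk (X ∩ Y) ≤ rk X + rk Y := by
  have := rk_submod_aux h (X \ Y) (Finset.sdiff_subset.trans hX) (X ∩ Y) Y
    Finset.inter_subset_right hY
  have e0 : X ∩ Y ∪ X \ Y = X := by
    ext a; simp only [Finset.mem_union, Finset.mem_inter, Finset.mem_sdiff]; tauto
  rw [e0] at this
  have e : Y ∪ X \ Y = X ∪ Y := by
    rw [Finset.union_sdiff_self_eq_union, Finset.union_comm]
  rw [e] at this
  omega

lemma skew_subset (h : RankAxioms E rk) {X Y X' Y' : Finset α} (hX : X ⊆ E) (hY : Y ⊆ E)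
    (hdisj : Disjoint X Y) (hskew : rk X + rk Y = rk (X ∪ Y))
    (hX' : X' ⊆ X) (hY' : Y' ⊆ Y) :
    rk X' + rk Y' = rk (X' ∪ Y') := by
  have hd : ∀ a, a ∈ X → a ∈ Y → False := fun a haX haY =>
    Finset.disjoint_left.mp hdisj haX haY
  have hmX : ∀ a, a ∈ X' → a ∈ X := fun a ha => hX' ha
  have hmY : ∀ a, a ∈ Y' → a ∈ Y := fun a ha => hY' ha
  have hX'E : X' ⊆ E := hX'.trans hX
  have hY'E : Y' ⊆ E := hY'.trans hY
  have e1 : (X' ∪ Y) ∪ X = X ∪ Y := by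
    ext a; simp only [Finset.mem_union]
    constructor <;> intro hh <;> [tauto; (have := hmX a; tauto)]
  have e2 : (X' ∪ Y) ∩ X = X' := by
    ext a; simp only [Finset.mem_union, Finset.mem_inter]
    have := hd a; have := hmX a; tauto
  have h1 := rk_submod h (Finset.union_subset hX'E hY) hX
  rw [e1, e2] at h1
  have e3 : (X' ∪ Y') ∪ Y = X' ∪ Y := by
    ext a; simp only [Finset.mem_union]
    have := hmY a; tauto
  have e4 : (X' ∪ Y') ∩ Y = Y' := by
    ext a; simp only [Finset.mem_union, Finset.mem_inter]
    have := hd a; have := hmX a; have := hmY a; tauto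
  have h2 := rk_submod h (Finset.union_subset hX'E hY'E) hY
  rw [e3, e4] at h2
  have h3 := rk_submod h hX'E hY'E
  have e5 : X' ∩ Y' = ∅ := by
    ext a; simp only [Finset.mem_inter, Finset.notMem_empty, iff_false]
    have := hd a; have := hmX a; have := hmY a; tauto
  rw [e5, h.1] at h3
  have h4 := rk_mono h (Finset.subset_union_left (s₂ := Y')) (Finset.union_subset hX'E hY'E)
  omega

end aux

set_option maxHeartbeats 1000000 in
/-- If `M` is connected, `S` is a connected subset, and `A` is a connected direct
summand of the contraction `M/S` (whose rank function is `T ↦ rk (T ∪ S) − rk S`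
on ground set `E \ S`), then `A ∪ S` is connected in `M`. -/
theorem summand_union_connected {α : Type*} [DecidableEq α]
    (E S A : Finset α) (rk : Finset α → ℕ)
    (hrk : RankAxioms E rk) (hS : S ⊆ E) (hA : A ⊆ E \ S)
    (hMconn : ConnOn rk E)
    (hSconn : ConnOn rk S)
    (hsummand :
      ((rk (A ∪ S) - rk S) + (rk (((E \ S) \ A) ∪ S) - rk S)) = rk E - rk S)
    (hAconn : ConnOn (fun T => rk (T ∪ S) - rk S) A) :
    ConnOn rk (S ∪ A) := by
  intro T hT hTne hTneq heq
  set U := (S ∪ A) \ T with hUdef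
  have hAE : A ⊆ E := hA.trans Finset.sdiff_subset
  have hSAE : S ∪ A ⊆ E := Finset.union_subset hS hAE
  have hdAS : ∀ a, a ∈ A → a ∈ S → False := fun a haA haS => by
    have := hA haA; rw [Finset.mem_sdiff] at this; exact this.2 haS
  have hmT : ∀ a, a ∈ T → a ∈ S ∪ A := fun a ha => hT ha
  have hmS : ∀ a, a ∈ S → a ∈ S ∪ A := fun a ha => Finset.mem_union_left _ ha
  have hmU : ∀ a, a ∈ U ↔ (a ∈ S ∨ a ∈ A) ∧ a ∉ T := fun a => by
    rw [hUdef, Finset.mem_sdiff, Finset.mem_union]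
  have hTU : T ∪ U = S ∪ A := Finset.union_sdiff_of_subset hT
  have hdTU : Disjoint T U := Finset.disjoint_sdiff
  have hdTU' : ∀ a, a ∈ T → a ∈ U → False := fun a h1 h2 =>
    Finset.disjoint_left.mp hdTU h1 h2
  have hTE : T ⊆ E := hT.trans hSAE
  have hUsub : U ⊆ S ∪ A := Finset.sdiff_subset
  have hUE : U ⊆ E := hUsub.trans hSAE
  have hskewTU : rk T + rk U = rk (T ∪ U) := by rw [hTU]; exact heq
  -- the final contradiction, used in both branches
  have final : rk S + rk A = rk (S ∪ A) → S.Nonempty → A.Nonempty → False := by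
    intro hrkSA hSne hAne
    have eB : ((E \ S) \ A) ∪ S = E \ A := by
      ext a
      simp only [Finset.mem_union, Finset.mem_sdiff]
      have h1 : a ∈ S → a ∈ E := fun h => hS h
      have := hdAS a
      tauto
    have hSsubEA : S ⊆ E \ A := fun a ha =>
      Finset.mem_sdiff.mpr ⟨hS ha, fun hc => hdAS a hc ha⟩
    have h1 : rk S ≤ rk (E \ A) := rk_mono hrk hSsubEA Finset.sdiff_subset
    have h2 : rk S ≤ rk E := rk_mono hrk hS (Finset.Subset.refl E)
    have h3 : rk (A ∪ S) = rk S + rk A := by rw [Finset.union_comm]; exact hrkSA.symm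
    rw [eB, h3] at hsummand
    have h4 : rk A + rk (E \ A) = rk E := by omega
    have hAneE : A ≠ E := by
      intro hh
      obtain ⟨s, hs⟩ := hSne
      exact hdAS s (by rw [hh]; exact hS hs) hs
    exact hMconn A hAE hAne hAneE h4
  -- split S
  have hS_eq : rk (T ∩ S) + rk (U ∩ S) = rk S := by
    have hsk := skew_subset hrk hTE hUE hdTU hskewTU
      (Finset.inter_subset_left (s₂ := S)) (Finset.inter_subset_left (s₂ := S))
    have e : (T ∩ S) ∪ (U ∩ S) = S := by
      ext a
      simp only [Finset.mem_union, Finset.mem_inter]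
      have := hmU a; have := hmS a
      constructor
      · tauto
      · intro ha
        by_cases hat : a ∈ T <;> tauto
    rw [e] at hsk; exact hsk
  have hScases : T ∩ S = ∅ ∨ T ∩ S = S := by
    by_contra hc
    push_neg at hc
    have hne : (T ∩ S).Nonempty := hc.1
    have e2 : S \ (T ∩ S) = U ∩ S := by
      ext a
      simp only [Finset.mem_sdiff, Finset.mem_inter]
      have := hmU a; tauto
    exact hSconn (T ∩ S) Finset.inter_subset_right hne hc.2 (by rw [e2]; exact hS_eq)
  rcases hScases with hTS | hTS
  · -- T ∩ S = ∅, so T ⊆ A and S ⊆ U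
    have hdTS : ∀ a, a ∈ T → a ∈ S → False := fun a h1 h2 => by
      have : a ∈ T ∩ S := Finset.mem_inter.mpr ⟨h1, h2⟩
      rw [hTS] at this; exact absurd this (Finset.notMem_empty a)
    have hTA : T ⊆ A := fun a ha => by
      have := hmT a ha; rw [Finset.mem_union] at this
      rcases this with h' | h'
      · exact absurd h' (fun hc => hdTS a ha hc)
      · exact h'
    have hSU : S ⊆ U := fun a ha =>
      (hmU a).mpr ⟨Or.inl ha, fun hc => hdTS a hc ha⟩
    by_cases hTAeq : T = A
    · have hSne : S.Nonempty := by
        rcases Finset.eq_empty_or_nonempty S with h' | h'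
        · exfalso; apply hTneq; rw [hTAeq, h', Finset.empty_union]
        · exact h'
      have hUS : U = S := by
        ext a
        rw [hmU a, hTAeq]
        have := hdAS a; tauto
      apply final ?_ hSne (hTAeq ▸ hTne)
      have h5 : rk T + rk U = rk (S ∪ A) := by rw [hTU] at hskewTU; exact hskewTU
      rw [hTAeq, hUS] at h5
      omega
    · -- contradiction with hAconn at T
      have hskewTS : rk T + rk S = rk (T ∪ S) :=
        skew_subset hrk hTE hUE hdTU hskewTU (Finset.Subset.refl T) hSU
      have eU : (A \ T) ∪ S = U := by
        ext a
        simp only [Finset.mem_union, Finset.mem_sdiff]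
        rw [hmU a]
        have := hdTS a; tauto
      have hSleU : rk S ≤ rk U := rk_mono hrk hSU hUE
      refine hAconn T hTA hTne hTAeq ?_
      show (rk (T ∪ S) - rk S) + (rk ((A \ T) ∪ S) - rk S) = rk (A ∪ S) - rk S
      rw [eU]
      have eAS : rk (A ∪ S) = rk T + rk U := by
        rw [Finset.union_comm, ← hTU]; exact hskewTU.symm
      omega
  · -- T ∩ S = S, so S ⊆ T and U ⊆ A
    have hSsubT : S ⊆ T := by
      intro a ha
      have h' : a ∈ T ∩ S := by rw [hTS]; exact ha
      exact (Finset.mem_inter.mp h').1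
    have hUA : U ⊆ A := fun a ha => by
      have h' := (hmU a).mp ha
      rcases h'.1 with h'' | h''
      · exact absurd (hSsubT h'') h'.2
      · exact h''
    have hUne : U.Nonempty := by
      rw [hUdef, Finset.sdiff_nonempty]
      intro hc
      exact hTneq (Finset.Subset.antisymm hT hc)
    by_cases hUAeq : U = A
    · have hTSe : T = S := by
        apply Finset.Subset.antisymm ?_ hSsubT
        intro a ha
        have h' := hmT a ha
        rw [Finset.mem_union] at h'
        rcases h' with h'' | h''
        · exact h''
        · exact absurd (by rw [hUAeq]; exact h'' : a ∈ U) (fun hc => hdTU' a ha hc)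
      apply final ?_ (hTSe ▸ hTne) (hUAeq ▸ hUne)
      have h5 : rk T + rk U = rk (S ∪ A) := by rw [hTU] at hskewTU; exact hskewTU
      rw [hTSe, hUAeq] at h5
      omega
    · have hskewUS : rk S + rk U = rk (S ∪ U) :=
        skew_subset hrk hTE hUE hdTU hskewTU hSsubT (Finset.Subset.refl U)
      have eT : (A \ U) ∪ S = T := by
        ext a
        simp only [Finset.mem_union, Finset.mem_sdiff]
        rw [hmU a]
        have := hdTU' a; have := hmT a
        have h1 : a ∈ S → a ∈ T := fun h => hSsubT h
        have h2 : a ∈ T → a ∈ S ∨ a ∈ A := fun h => Finset.mem_union.mp (hmT a h)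
        by_cases hat : a ∈ T <;> tauto
      have hSleT : rk S ≤ rk T := rk_mono hrk hSsubT hTE
      refine hAconn U hUA hUne hUAeq ?_
      show (rk (U ∪ S) - rk S) + (rk ((A \ U) ∪ S) - rk S) = rk (A ∪ S) - rk S
      rw [eT, Finset.union_comm U S]
      have eAS : rk (A ∪ S) = rk T + rk U := by
        rw [Finset.union_comm, ← hTU]; exact hskewTU.symm
      omega
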